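/- Let S = (S_v, S_e) be a nondegenerate TCK family for a graph G on H. For each vertex v set W_v = (S_v − Σ_{e ∈ r^{-1}(v)} S_e S_e*) H (SOT-sum). Then W_v is a wandering subspace supported on v: for any two pairs (μ, v) ≠ (ν, w) of paths μ, ν with s(μ) = v, s(ν) = w, the subspaces S_μ W_v and S_ν W_w are orthogonal. -/

import Mathlib

structure DirectedGraph where
  V : Type
  E : Type
  src : E → V
  rng : E → V

namespace DirectedGraph

/-- Two edges are composable (as in `e₂ e₁`, `e₂` after `e₁`) when `s(e₂) = r(e₁)`. -/
def Composable (G : DirectedGraph) (a b : G.E) : Prop := G.src a = G.rng b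

/-- A list `[eₙ, …, e₁]` of edges is a path when consecutive edges are composable. -/
def IsPathList (G : DirectedGraph) (μ : List G.E) : Prop := List.Chain' G.Composable μ

/-- The path `μ` has source `v` (vacuous for the empty path). -/
def SrcIs (G : DirectedGraph) (μ : List G.E) (v : G.V) : Prop :=
  ∀ e ∈ μ.getLast?, G.src e = v

/-- The path `μ`, regarded as a path with source `v`, has range `w`. -/
def RngIs (G : DirectedGraph) (v : G.V) (μ : List G.E) (w : G.V) : Prop :=
  match μ with
  | [] => v = w
  | e :: _ => G.rng e = w

/-- `μ` is a path with source `v`. -/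
def IsPathAt (G : DirectedGraph) (v : G.V) (μ : List G.E) : Prop :=
  G.IsPathList μ ∧ G.SrcIs μ v

/-- `μ` is a cycle at `v` : a path with source and range `v`. -/
def IsCycleAt (G : DirectedGraph) (v : G.V) (μ : List G.E) : Prop :=
  G.IsPathAt v μ ∧ G.RngIs v μ v

end DirectedGraph

/-- A Toeplitz–Cuntz–Krieger family for the directed graph `G` on the Hilbert space `H`:
pairwise orthogonal projections `Sv v`, partial isometries `Se e` with
`(Se e)* (Se e) = Sv (s e)`, and `∑_{e ∈ F} (Se e)(Se e)* ≤ Sv v` for finite `F ⊆ r⁻¹(v)`. -/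
structure TCKFamily (G : DirectedGraph) (H : Type) [NormedAddCommGroup H]
    [InnerProductSpace ℂ H] [CompleteSpace H] where
  Sv : G.V → H →L[ℂ] H
  Se : G.E → H →L[ℂ] H
  sv_sa : ∀ v, IsSelfAdjoint (Sv v)
  sv_idem : ∀ v, Sv v * Sv v = Sv v
  sv_orth : ∀ v w, v ≠ w → Sv v * Sv w = 0
  se_isom : ∀ e, ContinuousLinearMap.adjoint (Se e) * Se e = Sv (G.src e)
  tck_ineq : ∀ (v : G.V) (F : Finset G.E), (∀ e ∈ F, G.rng e = v) →
    ContinuousLinearMap.IsPositive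
      (Sv v - ∑ e ∈ F, Se e * ContinuousLinearMap.adjoint (Se e))

/-- The operator associated to a path `μ` with source `v`: the product of the edge
operators along `μ`, with the convention that the empty path at `v` gives `Sv v`. -/
noncomputable def pathOp {G : DirectedGraph} {H : Type} [NormedAddCommGroup H]
    [InnerProductSpace ℂ H] [CompleteSpace H]
    (S : TCKFamily G H) (v : G.V) (μ : List G.E) : H →L[ℂ] H :=
  match μ with
  | [] => S.Sv v
  | e :: rest => (((e :: rest)).map S.Se).prod

section Aux

open ContinuousLinearMap
open scoped InnerProductSpace

variable {H : Type} [NormedAddCommGroup H] [InnerProductSpace ℂ H] [CompleteSpace H]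
  {G : DirectedGraph} (S : TCKFamily G H)

private lemma zero_of_re_le {u : H} (h : RCLike.re (⟪u, u⟫_ℂ) ≤ 0) : u = 0 := by
  have h2 : (0:ℝ) ≤ RCLike.re (⟪u, u⟫_ℂ) := inner_self_nonneg (𝕜 := ℂ)
  have h3 : ‖u‖ * ‖u‖ = 0 := by
    rw [← inner_self_eq_norm_mul_norm (𝕜 := ℂ)]; exact le_antisymm h h2
  simpa using mul_self_eq_zero.mp h3

private lemma sv_apply_idem (v : G.V) (z : H) : S.Sv v (S.Sv v z) = S.Sv v z := by
  have h := congrArg (fun T : H →L[ℂ] H => T z) (S.sv_idem v)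
  simpa [mul_apply] using h

private lemma sv_orth_apply {v w : G.V} (h : v ≠ w) (z : H) :
    S.Sv v (S.Sv w z) = 0 := by
  have h' := congrArg (fun T : H →L[ℂ] H => T z) (S.sv_orth v w h)
  simpa [mul_apply] using h'

private lemma sv_inner (v : G.V) (a b : H) :
    ⟪S.Sv v a, b⟫_ℂ = ⟪a, S.Sv v b⟫_ℂ := by
  have h : ContinuousLinearMap.adjoint (S.Sv v) = S.Sv v :=
    isSelfAdjoint_iff'.mp (S.sv_sa v)
  conv_lhs => rw [← h]
  rw [adjoint_inner_left]

private lemma se_adj_se (e : G.E) (z : H) :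
    ContinuousLinearMap.adjoint (S.Se e) (S.Se e z) = S.Sv (G.src e) z := by
  have h := congrArg (fun T : H →L[ℂ] H => T z) (S.se_isom e)
  simpa [mul_apply] using h

private lemma se_ker (e : G.E) {u : H} (hu : S.Sv (G.src e) u = 0) :
    S.Se e u = 0 := by
  have h0 : ⟪S.Se e u, S.Se e u⟫_ℂ = 0 := by
    rw [← adjoint_inner_left, se_adj_se, hu, inner_zero_left]
  exact inner_self_eq_zero.mp h0

private lemma se_sv_src (e : G.E) (z : H) :
    S.Se e (S.Sv (G.src e) z) = S.Se e z := by
  have h : S.Se e (z - S.Sv (G.src e) z) = 0 := by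
    apply se_ker S e
    simp [map_sub, sv_apply_idem S]
  rw [map_sub, sub_eq_zero] at h
  exact h.symm

private lemma se_adj_ker (e : G.E) {z : H} (hz : S.Sv (G.rng e) z = 0) :
    ContinuousLinearMap.adjoint (S.Se e) z = 0 := by
  have hp := S.tck_ineq (G.rng e) {e} (by simp)
  have h2 := hp.2 z
  rw [reApplyInnerSelf] at h2
  simp only [sub_apply, Finset.sum_singleton, mul_apply_eq_comp, hz, zero_sub, inner_neg_left,
    map_neg] at h2
  rw [← adjoint_inner_right] at h2
  apply zero_of_re_le
  linarith

private lemma sv_rng_se (e : G.E) (z : H) :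
    S.Sv (G.rng e) (S.Se e z) = S.Se e z := by
  set u := S.Se e z - S.Sv (G.rng e) (S.Se e z) with hu_def
  have hu : S.Sv (G.rng e) u = 0 := by
    simp [hu_def, map_sub, sv_apply_idem S]
  have h1 : ContinuousLinearMap.adjoint (S.Se e) u = 0 := se_adj_ker S e hu
  have h0 : ⟪u, u⟫_ℂ = 0 := by
    have hsplit : ⟪u, u⟫_ℂ = ⟪S.Se e z, u⟫_ℂ - ⟪S.Sv (G.rng e) (S.Se e z), u⟫_ℂ := by
      rw [hu_def, inner_sub_left]
    have ha : ⟪S.Se e z, u⟫_ℂ = 0 := by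
      rw [← ContinuousLinearMap.adjoint_inner_right, h1, inner_zero_right]
    have hb : ⟪S.Sv (G.rng e) (S.Se e z), u⟫_ℂ = 0 := by
      rw [sv_inner S, hu, inner_zero_right]
    rw [hsplit, ha, hb, sub_zero]
  have := inner_self_eq_zero.mp h0
  rw [hu_def, sub_eq_zero] at this
  exact this.symm

private lemma se_adj_se_ne {e f : G.E} (hef : f ≠ e) (a : H) :
    ContinuousLinearMap.adjoint (S.Se f) (S.Se e a) = 0 := by
  classical
  by_cases hr : G.rng f = G.rng e
  · -- use tck_ineq on the pair {e, f}
    set a' := S.Sv (G.src e) a with ha'_def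
    have ha' : S.Sv (G.src e) a' = a' := sv_apply_idem S _ _
    have hz : S.Se e a = S.Se e a' := (se_sv_src S e a).symm
    set z := S.Se e a' with hz_def
    have hp := S.tck_ineq (G.rng e) {e, f} (by
      intro g hg
      rcases Finset.mem_insert.mp hg with h | h
      · rw [h]
      · rw [Finset.mem_singleton.mp h]; exact hr)
    have h2 := hp.2 z
    rw [reApplyInnerSelf] at h2
    have hsum : (∑ g ∈ ({e, f} : Finset G.E),
        S.Se g * ContinuousLinearMap.adjoint (S.Se g)) =
        S.Se e * ContinuousLinearMap.adjoint (S.Se e)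
          + S.Se f * ContinuousLinearMap.adjoint (S.Se f) :=
      Finset.sum_pair (fun h => hef h.symm)
    rw [hsum] at h2
    have hzz : S.Sv (G.rng e) z = z := sv_rng_se S e a'
    have he' : ContinuousLinearMap.adjoint (S.Se e) z = a' := by
      rw [hz_def, se_adj_se, ha']
    simp only [sub_apply, add_apply, mul_apply_eq_comp, hzz, he'] at h2
    rw [inner_sub_left, inner_add_left] at h2
    have hza : ⟪S.Se e a', z⟫_ℂ = ⟪z, z⟫_ℂ := by rw [← hz_def]
    rw [hza, ← ContinuousLinearMap.adjoint_inner_right (S.Se f)] at h2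
    simp only [map_sub, map_add] at h2
    have : ContinuousLinearMap.adjoint (S.Se f) z = 0 := by
      apply zero_of_re_le; linarith
    rw [hz, this]
  · apply se_adj_ker S f
    rw [← sv_rng_se S e a, sv_orth_apply S hr]

private lemma adj_zero_of_wandering {v : G.V} {x : H} (hx1 : S.Sv v x = x)
    (hx2 : ∀ e : G.E, G.rng e = v → ContinuousLinearMap.adjoint (S.Se e) x = 0)
    (e : G.E) : ContinuousLinearMap.adjoint (S.Se e) x = 0 := by
  by_cases h : G.rng e = v
  · exact hx2 e h
  · apply se_adj_ker S e
    rw [← hx1, sv_orth_apply S h]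

private lemma isPathAt_tail {v : G.V} {e : G.E} {μ : List G.E}
    (h : G.IsPathAt v (e :: μ)) : G.IsPathAt v μ := by
  refine ⟨(List.isChain_cons.mp h.1).2, ?_⟩
  intro g hg
  apply h.2
  cases μ with
  | nil => simp at hg
  | cons a l => rw [List.getLast?_cons_cons]; exact hg

private lemma wandering_key {v w : G.V} {x y : H}
    (hx1 : S.Sv v x = x)
    (hx2 : ∀ e : G.E, ContinuousLinearMap.adjoint (S.Se e) x = 0)
    (hy1 : S.Sv w y = y)
    (hy2 : ∀ e : G.E, ContinuousLinearMap.adjoint (S.Se e) y = 0) :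
    ∀ (μ : List G.E), G.IsPathAt v μ → ∀ (ν : List G.E), G.IsPathAt w ν →
      (v, μ) ≠ (w, ν) →
      ⟪(μ.map S.Se).prod x, (ν.map S.Se).prod y⟫_ℂ = 0 := by
  intro μ
  induction μ with
  | nil =>
    intro _ ν hν hne
    cases ν with
    | nil =>
      have hvw : v ≠ w := by
        intro h; exact hne (by rw [h])
      simp only [List.map_nil, List.prod_nil, one_apply_eq_self]
      calc ⟪x, y⟫_ℂ = ⟪S.Sv v x, S.Sv w y⟫_ℂ := by rw [hx1, hy1]
        _ = ⟪x, S.Sv v (S.Sv w y)⟫_ℂ := sv_inner S v _ _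
        _ = 0 := by rw [sv_orth_apply S hvw, inner_zero_right]
    | cons f ν' =>
      simp only [List.map_nil, List.prod_nil, one_apply_eq_self, List.map_cons, List.prod_cons,
        mul_apply_eq_comp]
      rw [← ContinuousLinearMap.adjoint_inner_left, hx2, inner_zero_left]
  | cons e μ' ih =>
    intro hμ ν hν hne
    have hμ' : G.IsPathAt v μ' := isPathAt_tail hμ
    cases ν with
    | nil =>
      simp only [List.map_cons, List.prod_cons, mul_apply_eq_comp, List.map_nil, List.prod_nil,
        one_apply_eq_self]
      rw [← ContinuousLinearMap.adjoint_inner_right, hy2, inner_zero_right]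
    | cons f ν' =>
      have hν' : G.IsPathAt w ν' := isPathAt_tail hν
      simp only [List.map_cons, List.prod_cons, mul_apply_eq_comp]
      by_cases hef : e = f
      · subst hef
        have hb : S.Sv (G.src e) ((ν'.map S.Se).prod y) = (ν'.map S.Se).prod y := by
          cases ν' with
          | nil =>
            have hsw : G.src e = w := hν.2 e (by simp)
            simp only [List.map_nil, List.prod_nil, one_apply_eq_self, hsw]
            exact hy1
          | cons g rest =>
            have hcomp : G.Composable e g := (List.isChain_cons_cons.mp hν.1).1
            simp only [List.map_cons, List.prod_cons, mul_apply_eq_comp]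
            rw [show G.src e = G.rng g from hcomp]
            exact sv_rng_se S g _
        have hne' : (v, μ') ≠ (w, ν') := by
          intro h
          apply hne
          simp only [Prod.mk.injEq] at h ⊢
          exact ⟨h.1, by rw [h.2]⟩
        rw [← ContinuousLinearMap.adjoint_inner_right, se_adj_se, hb]
        exact ih hμ' ν' hν' hne'
      · rw [← ContinuousLinearMap.adjoint_inner_left,
          se_adj_se_ne S (fun h => hef h.symm), inner_zero_left]

end Aux

/-- Let `S` be a nondegenerate TCK family. For each vertex `v`,
the space `W_v = (S_v − ∑_{r(e)=v} S_e S_e*) H`, i.e. the set of `x` with `S_v x = x`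
and `S_e* x = 0` for all `e ∈ r⁻¹(v)`, is a wandering subspace supported on `v`:
for `(v, μ) ≠ (w, ν)` (paths `μ, ν` with sources `v, w`), `S_μ W_v ⟂ S_ν W_w`. -/
theorem stmt5 {H : Type} [NormedAddCommGroup H] [InnerProductSpace ℂ H] [CompleteSpace H]
    (G : DirectedGraph) (S : TCKFamily G H)
    (hnd : ∀ x : H, (∀ v, S.Sv v x = 0) → x = 0)
    {v w : G.V} {x y : H}
    (hx1 : S.Sv v x = x)
    (hx2 : ∀ e : G.E, G.rng e = v → ContinuousLinearMap.adjoint (S.Se e) x = 0)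
    (hy1 : S.Sv w y = y)
    (hy2 : ∀ e : G.E, G.rng e = w → ContinuousLinearMap.adjoint (S.Se e) y = 0)
    {μ ν : List G.E} (hμ : G.IsPathAt v μ) (hν : G.IsPathAt w ν)
    (hne : (v, μ) ≠ (w, ν)) :
    (@inner ℂ H _ (pathOp S v μ x) (pathOp S w ν y)) = 0 := by
  classical
  have hx2' : ∀ e : G.E, ContinuousLinearMap.adjoint (S.Se e) x = 0 :=
    adj_zero_of_wandering S hx1 hx2
  have hy2' : ∀ e : G.E, ContinuousLinearMap.adjoint (S.Se e) y = 0 :=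
    adj_zero_of_wandering S hy1 hy2
  have key := wandering_key S hx1 hx2' hy1 hy2' μ hμ ν hν hne
  have hpx : pathOp S v μ x = (μ.map S.Se).prod x := by
    cases μ with
    | nil => simp [pathOp, hx1]
    | cons e rest => rfl
  have hpy : pathOp S w ν y = (ν.map S.Se).prod y := by
    cases ν with
    | nil => simp [pathOp, hy1]
    | cons e rest => rfl
  rw [hpx, hpy]
  exact key
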